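/- Let Z : [0,1] → ℝ be continuous with Z(0) = Z(1), set Z_* := min_{[0,1]} Z, and fix t ∈ [0,1]. Then for every r ∈ [0, Z(t) − Z_*], the point γ_t(r) is well defined (at least one of the two defining sets is nonempty and attains its minimum) and satisfies Z(γ_t(r)) = Z(t) − r; moreover, for all 0 ≤ r ≤ r' ≤ Z(t) − Z_*, D(γ_t(r), γ_t(r')) = r' − r. In particular, r ↦ γ_t(r) is a geodesic for the pseudometric D from t (= γ_t(0)) to a point where Z attains its minimum. -/

import Mathlib

/-- The cyclic interval `[s,t]` in `[0,1]`. -/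
def cyclInt (s t : ℝ) : Set ℝ :=
  if s ≤ t then Set.Icc s t else Set.Icc s 1 ∪ Set.Icc 0 t

/-- `D°(s,t) = Z(s) + Z(t) - 2 max( min_{[s,t]} Z, min_{[t,s]} Z )`. -/
noncomputable def Dcirc (Z : ℝ → ℝ) (s t : ℝ) : ℝ :=
  Z s + Z t - 2 * max (sInf (Z '' cyclInt s t)) (sInf (Z '' cyclInt t s))

/-- `D(s,t)`, the infimum over finite chains in `[0,1]` of sums of `D°`-increments. -/
noncomputable def Dmap (Z : ℝ → ℝ) (s t : ℝ) : ℝ :=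
  sInf {x | ∃ k : ℕ, 1 ≤ k ∧ ∃ f : ℕ → ℝ,
    (∀ i ≤ k, f i ∈ Set.Icc (0:ℝ) 1) ∧ f 0 = s ∧ f k = t ∧
    x = ∑ i ∈ Finset.range k, Dcirc Z (f i) (f (i + 1))}

/-- First candidate set in the definition of the simple geodesic:
points of `[t,1]` where `Z` equals `Z t - r`. -/
def gammaSetR (Z : ℝ → ℝ) (t r : ℝ) : Set ℝ :=
  {s | s ∈ Set.Icc t 1 ∧ Z s = Z t - r}

/-- Second candidate set: points of `[0,t]` where `Z` equals `Z t - r`. -/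
def gammaSetL (Z : ℝ → ℝ) (t r : ℝ) : Set ℝ :=
  {s | s ∈ Set.Icc 0 t ∧ Z s = Z t - r}

open Classical in
/-- The simple geodesic `γ_t(r)`. -/
noncomputable def gammaP (Z : ℝ → ℝ) (t r : ℝ) : ℝ :=
  if (gammaSetR Z t r).Nonempty then sInf (gammaSetR Z t r) else sInf (gammaSetL Z t r)

open Set

section Aux

lemma cyclInt_subset {s t : ℝ} (hs : s ∈ Set.Icc (0:ℝ) 1) (ht : t ∈ Set.Icc (0:ℝ) 1) :
    cyclInt s t ⊆ Set.Icc 0 1 := by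
  unfold cyclInt
  split_ifs
  · exact Set.Icc_subset_Icc hs.1 ht.2
  · exact Set.union_subset (Set.Icc_subset_Icc hs.1 le_rfl) (Set.Icc_subset_Icc le_rfl ht.2)

lemma left_mem_cyclInt {s t : ℝ} (hs : s ∈ Set.Icc (0:ℝ) 1) : s ∈ cyclInt s t := by
  unfold cyclInt; split_ifs with h
  · exact ⟨le_rfl, h⟩
  · exact Or.inl ⟨le_rfl, hs.2⟩

lemma right_mem_cyclInt {s t : ℝ} (ht : t ∈ Set.Icc (0:ℝ) 1) : t ∈ cyclInt s t := by
  unfold cyclInt; split_ifs with h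
  · exact ⟨h, le_rfl⟩
  · exact Or.inr ⟨ht.1, le_rfl⟩

lemma sInf_image_le (Z : ℝ → ℝ) (hbdd : BddBelow (Z '' Set.Icc (0:ℝ) 1))
    {A : Set ℝ} (hA : A ⊆ Set.Icc 0 1) {x : ℝ} (hx : x ∈ A) : sInf (Z '' A) ≤ Z x :=
  csInf_le (hbdd.mono (Set.image_mono hA)) ⟨x, hx, rfl⟩

lemma abs_le_Dcirc {Z : ℝ → ℝ} (hbdd : BddBelow (Z '' Set.Icc (0:ℝ) 1))
    {s t : ℝ} (hs : s ∈ Set.Icc (0:ℝ) 1) (ht : t ∈ Set.Icc (0:ℝ) 1) :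
    |Z t - Z s| ≤ Dcirc Z s t := by
  have h1s : sInf (Z '' cyclInt s t) ≤ Z s :=
    sInf_image_le Z hbdd (cyclInt_subset hs ht) (left_mem_cyclInt hs)
  have h1t : sInf (Z '' cyclInt s t) ≤ Z t :=
    sInf_image_le Z hbdd (cyclInt_subset hs ht) (right_mem_cyclInt ht)
  have h2s : sInf (Z '' cyclInt t s) ≤ Z s :=
    sInf_image_le Z hbdd (cyclInt_subset ht hs) (right_mem_cyclInt hs)
  have h2t : sInf (Z '' cyclInt t s) ≤ Z t :=
    sInf_image_le Z hbdd (cyclInt_subset ht hs) (left_mem_cyclInt ht)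
  have hm : max (sInf (Z '' cyclInt s t)) (sInf (Z '' cyclInt t s)) ≤ Z s := max_le h1s h2s
  have hm' : max (sInf (Z '' cyclInt s t)) (sInf (Z '' cyclInt t s)) ≤ Z t := max_le h1t h2t
  unfold Dcirc
  rw [abs_sub_le_iff]
  constructor <;> linarith

lemma chain_lb {Z : ℝ → ℝ} (hbdd : BddBelow (Z '' Set.Icc (0:ℝ) 1))
    {k : ℕ} {f : ℕ → ℝ} (hf : ∀ i ≤ k, f i ∈ Set.Icc (0:ℝ) 1) :
    |Z (f k) - Z (f 0)| ≤ ∑ i ∈ Finset.range k, Dcirc Z (f i) (f (i + 1)) := by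
  calc |Z (f k) - Z (f 0)| = |∑ i ∈ Finset.range k, (Z (f (i+1)) - Z (f i))| := by
        rw [Finset.sum_range_sub (fun i => Z (f i))]
    _ ≤ ∑ i ∈ Finset.range k, |Z (f (i+1)) - Z (f i)| := Finset.abs_sum_le_sum_abs _ _
    _ ≤ ∑ i ∈ Finset.range k, Dcirc Z (f i) (f (i+1)) := by
        apply Finset.sum_le_sum
        intro i hi
        rw [Finset.mem_range] at hi
        exact abs_le_Dcirc hbdd (hf i hi.le) (hf (i+1) hi)

/-- "No dip" lemma: if `b` is the first point of `[u,v]` where continuous `Z` hits level `c`,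
and `Z u ≥ c`, then `Z ≥ c` on `[u,b]`. -/
lemma no_dip {Z : ℝ → ℝ} {u v c b : ℝ}
    (hc : ContinuousOn Z (Set.Icc u v)) (hcu : c ≤ Z u)
    (hb : b ∈ Set.Icc u v) (hZb : Z b = c)
    (hmin : ∀ s ∈ Set.Icc u v, Z s = c → b ≤ s) :
    ∀ s ∈ Set.Icc u b, c ≤ Z s := by
  intro s hs
  by_contra hlt
  push_neg at hlt
  have hus : u ≤ s := hs.1
  have hc' : c ∈ Set.Icc (Z s) (Z u) := ⟨hlt.le, hcu⟩
  obtain ⟨s', hs', hZs'⟩ :=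
    intermediate_value_Icc' hus (hc.mono (Set.Icc_subset_Icc le_rfl (hs.2.trans hb.2))) hc'
  have hbs' : b ≤ s' := hmin s' ⟨hs'.1, (hs'.2.trans hs.2).trans hb.2⟩ hZs'
  have : s = b := le_antisymm hs.2 (hbs'.trans hs'.2)
  rw [this, hZb] at hlt
  exact lt_irrefl _ hlt

end Aux

section Main

variable {Z : ℝ → ℝ} {t : ℝ}

lemma gamma_spec (Z : ℝ → ℝ) (hcont : ContinuousOn Z (Set.Icc 0 1)) (hZ : Z 0 = Z 1)
    (t : ℝ) (ht : t ∈ Set.Icc (0:ℝ) 1) (r : ℝ)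
    (hr0 : 0 ≤ r) (hr1 : r ≤ Z t - sInf (Z '' Set.Icc (0:ℝ) 1)) :
    ((gammaSetR Z t r).Nonempty → gammaP Z t r ∈ gammaSetR Z t r ∧
        ∀ s ∈ gammaSetR Z t r, gammaP Z t r ≤ s) ∧
    (¬ (gammaSetR Z t r).Nonempty →
        (∀ s ∈ Set.Icc t 1, Z t - r < Z s) ∧
        gammaP Z t r ∈ gammaSetL Z t r ∧ ∀ s ∈ gammaSetL Z t r, gammaP Z t r ≤ s) := by
  have hcR : ContinuousOn Z (Set.Icc t 1) := hcont.mono (Set.Icc_subset_Icc ht.1 le_rfl)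
  have hcL : ContinuousOn Z (Set.Icc 0 t) := hcont.mono (Set.Icc_subset_Icc le_rfl ht.2)
  have hRclosed : IsClosed (gammaSetR Z t r) :=
    hcR.preimage_isClosed_of_isClosed isClosed_Icc (isClosed_singleton (x := Z t - r))
  have hLclosed : IsClosed (gammaSetL Z t r) :=
    hcL.preimage_isClosed_of_isClosed isClosed_Icc (isClosed_singleton (x := Z t - r))
  have hZtr : Z t - r ≤ Z t := by linarith
  constructor
  · intro hne
    have hmem : sInf (gammaSetR Z t r) ∈ gammaSetR Z t r :=
      hRclosed.csInf_mem hne ⟨t, fun s hs => hs.1.1⟩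
    have hP : gammaP Z t r = sInf (gammaSetR Z t r) := by rw [gammaP, if_pos hne]
    rw [hP]
    exact ⟨hmem, fun s hs => csInf_le ⟨t, fun u hu => hu.1.1⟩ hs⟩
  · intro hne
    have hstrict : ∀ s ∈ Set.Icc t 1, Z t - r < Z s := by
      intro s hs
      by_contra hle
      push_neg at hle
      have hc' : Z t - r ∈ Set.Icc (Z s) (Z t) := ⟨hle, hZtr⟩
      obtain ⟨s', hs', hZs'⟩ :=
        intermediate_value_Icc' hs.1 (hcR.mono (Set.Icc_subset_Icc le_rfl hs.2)) hc'
      exact hne ⟨s', ⟨hs'.1, hs'.2.trans hs.2⟩, hZs'⟩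
    have hLne : (gammaSetL Z t r).Nonempty := by
      have hK : IsCompact (Z '' Set.Icc (0:ℝ) 1) := isCompact_Icc.image_of_continuousOn hcont
      have hne1 : (Z '' Set.Icc (0:ℝ) 1).Nonempty :=
        ⟨Z 0, 0, ⟨le_rfl, zero_le_one⟩, rfl⟩
      obtain ⟨m, hm, hZm⟩ := hK.sInf_mem hne1
      have hMle : sInf (Z '' Set.Icc (0:ℝ) 1) ≤ Z t - r := by linarith
      have hmt : m ≤ t := by
        by_contra hmt
        push_neg at hmt
        have := hstrict m ⟨hmt.le, hm.2⟩
        rw [hZm] at this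
        linarith
      have hmem0t : m ∈ Set.Icc (0:ℝ) t := ⟨hm.1, hmt⟩
      have hc' : Z t - r ∈ Set.Icc (Z m) (Z t) := ⟨by rw [hZm]; exact hMle, hZtr⟩
      obtain ⟨s', hs', hZs'⟩ :=
        intermediate_value_Icc hmt (hcL.mono (Set.Icc_subset_Icc hm.1 le_rfl)) hc'
      exact ⟨s', ⟨hm.1.trans hs'.1, hs'.2⟩, hZs'⟩
    have hmem : sInf (gammaSetL Z t r) ∈ gammaSetL Z t r :=
      hLclosed.csInf_mem hLne ⟨0, fun s hs => hs.1.1⟩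
    have hP : gammaP Z t r = sInf (gammaSetL Z t r) := by rw [gammaP, if_neg hne]
    rw [hP]
    exact ⟨hstrict, hmem, fun s hs => csInf_le ⟨0, fun u hu => hu.1.1⟩ hs⟩

end Main

theorem simple_geodesic
    (Z : ℝ → ℝ) (hcont : ContinuousOn Z (Set.Icc 0 1)) (hZ : Z 0 = Z 1)
    (t : ℝ) (ht : t ∈ Set.Icc (0:ℝ) 1) :
    (∀ r ∈ Set.Icc (0:ℝ) (Z t - sInf (Z '' Set.Icc (0:ℝ) 1)),
      ((gammaSetR Z t r).Nonempty → gammaP Z t r ∈ gammaSetR Z t r) ∧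
      (¬ (gammaSetR Z t r).Nonempty →
        (gammaSetL Z t r).Nonempty ∧ gammaP Z t r ∈ gammaSetL Z t r) ∧
      Z (gammaP Z t r) = Z t - r) ∧
    (∀ r r' : ℝ, 0 ≤ r → r ≤ r' → r' ≤ Z t - sInf (Z '' Set.Icc (0:ℝ) 1) →
      Dmap Z (gammaP Z t r) (gammaP Z t r') = r' - r) := by
  have hbdd : BddBelow (Z '' Set.Icc (0:ℝ) 1) :=
    (isCompact_Icc.image_of_continuousOn hcont).bddBelow
  have hcR : ContinuousOn Z (Set.Icc t 1) := hcont.mono (Set.Icc_subset_Icc ht.1 le_rfl)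
  have hcL : ContinuousOn Z (Set.Icc 0 t) := hcont.mono (Set.Icc_subset_Icc le_rfl ht.2)
  constructor
  · intro r hr
    have spec := gamma_spec Z hcont hZ t ht r hr.1 hr.2
    refine ⟨fun h => (spec.1 h).1, fun h => ⟨⟨_, (spec.2 h).2.1⟩, (spec.2 h).2.1⟩, ?_⟩
    by_cases hne : (gammaSetR Z t r).Nonempty
    · exact ((spec.1 hne).1).2
    · exact ((spec.2 hne).2.1).2
  · intro r r' hr0 hrr' hr'1
    have hr1 : r ≤ Z t - sInf (Z '' Set.Icc (0:ℝ) 1) := hrr'.trans hr'1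
    have hr'0 : 0 ≤ r' := hr0.trans hrr'
    have spec := gamma_spec Z hcont hZ t ht r hr0 hr1
    have spec' := gamma_spec Z hcont hZ t ht r' hr'0 hr'1
    set a := gammaP Z t r with ha_def
    set b := gammaP Z t r' with hb_def
    set c := Z t - r with hc_def
    set c' := Z t - r' with hc'_def
    have hcc' : c' ≤ c := by simp only [hc_def, hc'_def]; linarith
    have hcZt : c ≤ Z t := by simp only [hc_def]; linarith
    have hc'Zt : c' ≤ Z t := by simp only [hc'_def]; linarith
    -- establish membership / values / key minimum property by cases
    have key : a ∈ Set.Icc (0:ℝ) 1 ∧ b ∈ Set.Icc (0:ℝ) 1 ∧ Z a = c ∧ Z b = c' ∧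
        (∀ s ∈ cyclInt a b, Z b ≤ Z s) := by
      by_cases hR' : (gammaSetR Z t r').Nonempty
      · -- both right
        obtain ⟨hbmem, hbmin⟩ := spec'.1 hR'
        have hb1 : b ∈ Set.Icc t 1 := hbmem.1
        have hZb : Z b = c' := hbmem.2
        have hR : (gammaSetR Z t r).Nonempty := by
          have hcmem : c ∈ Set.Icc (Z b) (Z t) := ⟨hZb ▸ hcc', hcZt⟩
          obtain ⟨s', hs', hZs'⟩ :=
            intermediate_value_Icc' hb1.1 (hcR.mono (Set.Icc_subset_Icc le_rfl hb1.2)) hcmem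
          exact ⟨s', ⟨hs'.1, hs'.2.trans hb1.2⟩, hZs'⟩
        obtain ⟨hamem, hamin⟩ := spec.1 hR
        have ha1 : a ∈ Set.Icc t 1 := hamem.1
        have hZa : Z a = c := hamem.2
        have hdip : ∀ s ∈ Set.Icc t b, c' ≤ Z s := by
          refine no_dip hcR ?_ hb1 hZb (fun s hs h => hbmin s ⟨hs, h⟩)
          exact hc'Zt
        have hab : a ≤ b := by
          have hcmem : c ∈ Set.Icc (Z b) (Z t) := ⟨hZb ▸ hcc', hcZt⟩
          obtain ⟨s', hs', hZs'⟩ :=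
            intermediate_value_Icc' hb1.1 (hcR.mono (Set.Icc_subset_Icc le_rfl hb1.2)) hcmem
          exact (hamin s' ⟨⟨hs'.1, hs'.2.trans hb1.2⟩, hZs'⟩).trans hs'.2
        refine ⟨⟨ht.1.trans ha1.1, ha1.2⟩, ⟨ht.1.trans hb1.1, hb1.2⟩, hZa, hZb, ?_⟩
        intro s hs
        rw [cyclInt, if_pos hab] at hs
        rw [hZb]
        exact hdip s ⟨ha1.1.trans hs.1, hs.2⟩
      · -- r' is a left case
        obtain ⟨hstrict', hbmem, hbmin⟩ := spec'.2 hR'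
        have hb1 : b ∈ Set.Icc 0 t := hbmem.1
        have hZb : Z b = c' := hbmem.2
        have hZ0 : c' < Z 0 := by
          rw [hZ]; exact hstrict' 1 ⟨ht.2, le_rfl⟩
        have hdipL : ∀ s ∈ Set.Icc 0 b, c' ≤ Z s :=
          no_dip hcL hZ0.le hb1 hZb (fun s hs h => hbmin s ⟨hs, h⟩)
        by_cases hR : (gammaSetR Z t r).Nonempty
        · -- r right, r' left
          obtain ⟨hamem, _⟩ := spec.1 hR
          have ha1 : a ∈ Set.Icc t 1 := hamem.1
          have hZa : Z a = c := hamem.2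
          refine ⟨⟨ht.1.trans ha1.1, ha1.2⟩, ⟨hb1.1, hb1.2.trans ht.2⟩, hZa, hZb, ?_⟩
          intro s hs
          rw [cyclInt] at hs
          rw [hZb]
          split_ifs at hs with hab
          · -- a ≤ b forces a = b = t
            have hba : b ≤ a := hb1.2.trans ha1.1
            have : a = b := le_antisymm hab hba
            rw [this] at hs
            have : s = b := le_antisymm hs.2 hs.1
            rw [this]
            exact hZb.ge
          · rcases hs with hs | hs
            · exact (hstrict' s ⟨ha1.1.trans hs.1, hs.2⟩).le
            · exact hdipL s hs
        · -- both left
          obtain ⟨hstrict, hamem, hamin⟩ := spec.2 hR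
          have ha1 : a ∈ Set.Icc 0 t := hamem.1
          have hZa : Z a = c := hamem.2
          have hZ0c : c < Z 0 := by rw [hZ]; exact hstrict 1 ⟨ht.2, le_rfl⟩
          have hab : a ≤ b := by
            have hcmem : c ∈ Set.Icc (Z b) (Z 0) := ⟨hZb ▸ hcc', hZ0c.le⟩
            obtain ⟨s', hs', hZs'⟩ :=
              intermediate_value_Icc' hb1.1
                (hcL.mono (Set.Icc_subset_Icc le_rfl hb1.2)) hcmem
            exact (hamin s' ⟨⟨hs'.1, hs'.2.trans hb1.2⟩, hZs'⟩).trans hs'.2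
          refine ⟨⟨ha1.1, ha1.2.trans ht.2⟩, ⟨hb1.1, hb1.2.trans ht.2⟩, hZa, hZb, ?_⟩
          intro s hs
          rw [cyclInt, if_pos hab] at hs
          rw [hZb]
          exact hdipL s ⟨ha1.1.trans hs.1, hs.2⟩
    obtain ⟨ha01, hb01, hZa, hZb, hkey⟩ := key
    -- compute Dcirc Z a b = r' - r
    have hinf1 : sInf (Z '' cyclInt a b) = Z b := by
      refine le_antisymm
        (sInf_image_le Z hbdd (cyclInt_subset ha01 hb01) (right_mem_cyclInt hb01)) ?_
      refine le_csInf ⟨Z b, b, right_mem_cyclInt hb01, rfl⟩ ?_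
      rintro x ⟨s, hs, rfl⟩
      exact hkey s hs
    have hinf2 : sInf (Z '' cyclInt b a) ≤ Z b :=
      sInf_image_le Z hbdd (cyclInt_subset hb01 ha01) (left_mem_cyclInt hb01)
    have hDcirc : Dcirc Z a b = r' - r := by
      rw [Dcirc, hinf1, max_eq_left hinf2, hZa, hZb]
      simp only [hc_def, hc'_def]
      ring
    -- compute Dmap
    have hmem : (r' - r) ∈ {x | ∃ k : ℕ, 1 ≤ k ∧ ∃ f : ℕ → ℝ,
        (∀ i ≤ k, f i ∈ Set.Icc (0:ℝ) 1) ∧ f 0 = a ∧ f k = b ∧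
        x = ∑ i ∈ Finset.range k, Dcirc Z (f i) (f (i + 1))} := by
      refine ⟨1, le_rfl, fun i => if i = 0 then a else b, ?_, if_pos rfl, if_neg one_ne_zero, ?_⟩
      · intro i _
        dsimp only
        split_ifs
        · exact ha01
        · exact hb01
      · simp [hDcirc]
    have hlb : ∀ x ∈ {x | ∃ k : ℕ, 1 ≤ k ∧ ∃ f : ℕ → ℝ,
        (∀ i ≤ k, f i ∈ Set.Icc (0:ℝ) 1) ∧ f 0 = a ∧ f k = b ∧
        x = ∑ i ∈ Finset.range k, Dcirc Z (f i) (f (i + 1))}, r' - r ≤ x := by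
      rintro x ⟨k, hk, f, hf, hf0, hfk, rfl⟩
      have := chain_lb hbdd hf
      rw [hf0, hfk, hZa, hZb] at this
      have habs : |c' - c| = r' - r := by
        rw [abs_of_nonpos (by linarith)]
        simp only [hc_def, hc'_def]
        ring
      linarith [habs ▸ this]
    exact le_antisymm (csInf_le ⟨r' - r, hlb⟩ hmem) (le_csInf ⟨_, hmem⟩ hlb)
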